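/- For all sufficiently large n, every n-edge-coloured bipartite multigraph in which each colour class is a matching of size at least n contains a rainbow matching of size at least n - \sqrt{n}. -/

import Mathlib

open Finset
open scoped Classical
set_option linter.unusedSectionVars false

section Defs

variable {V C E : Type*}

/-- The two endpoints of an edge of a multigraph given by endpoint functions `e₁ e₂`. -/
def edgeEnds [DecidableEq V] (e₁ e₂ : E → V) (e : E) : Finset V := {e₁ e, e₂ e}

/-- A finite set of edges is a matching: all edges are non-loops and pairwise vertex-disjoint. -/
def IsMatchingE [DecidableEq V] (e₁ e₂ : E → V) (M : Finset E) : Prop :=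
  (∀ e ∈ M, e₁ e ≠ e₂ e) ∧
  ∀ a ∈ M, ∀ b ∈ M, a ≠ b → Disjoint (edgeEnds e₁ e₂ a) (edgeEnds e₁ e₂ b)

/-- A set of edges is rainbow: all its edges have pairwise distinct colours. -/
def IsRainbow (col : E → C) (M : Finset E) : Prop := Set.InjOn col ↑M

/-- The colour class of colour `c`: the set of all edges of colour `c`. -/
noncomputable def colourClass [Fintype E] (col : E → C) (c : C) : Finset E :=
  Finset.univ.filter fun e => col e = c

/-- The set of vertices covered by a set of edges `M`. -/
def matchedVerts [DecidableEq V] (e₁ e₂ : E → V) (M : Finset E) : Finset V :=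
  M.biUnion (edgeEnds e₁ e₂)

/-- The set of vertices spanned by the colour class of `c`
(i.e. incident to at least one edge of colour `c`). -/
noncomputable def spannedVerts [Fintype V] [DecidableEq V] [Fintype E]
    (e₁ e₂ : E → V) (col : E → C) (c : C) : Finset V :=
  Finset.univ.filter fun v => ∃ e, col e = c ∧ (e₁ e = v ∨ e₂ e = v)

/-- `u` and `v` are distinct vertices joined by an edge of colour `c`. -/
def adjOfColour (e₁ e₂ : E → V) (col : E → C) (c : C) (u v : V) : Prop :=
  u ≠ v ∧ ∃ e, col e = c ∧ ((e₁ e = u ∧ e₂ e = v) ∨ (e₁ e = v ∧ e₂ e = u))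

/-- The colour class of `c` is a vertex-disjoint union of (non-trivial) cliques:
whenever `uv` and `vw` are edges of colour `c` with `u ≠ w`, also `uw` is an
edge of colour `c`. -/
def IsCliqueUnion (e₁ e₂ : E → V) (col : E → C) (c : C) : Prop :=
  ∀ u v w, adjOfColour e₁ e₂ col c u v → adjOfColour e₁ e₂ col c v w → u ≠ w →
    adjOfColour e₁ e₂ col c u w

end Defs

section Aux

variable {V E C : Type} [Fintype V] [DecidableEq V] [Fintype E] [DecidableEq C]

/-- the endpoint on side `false` -/
def aEnd (e₁ e₂ : E → V) (part : V → Bool) (e : E) : V :=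
  if part (e₁ e) = false then e₁ e else e₂ e

/-- the endpoint on side `true` -/
def bEnd (e₁ e₂ : E → V) (part : V → Bool) (e : E) : V :=
  if part (e₁ e) = false then e₂ e else e₁ e

variable {e₁ e₂ : E → V} {part : V → Bool} {col : E → C} {M : Finset E}

lemma part_aEnd (hbip : ∀ e, part (e₁ e) ≠ part (e₂ e)) (e : E) :
    part (aEnd e₁ e₂ part e) = false := by
  have := hbip e
  unfold aEnd
  split
  · assumption
  · rename_i h
    revert this h
    cases part (e₁ e) <;> cases part (e₂ e) <;> simp

lemma part_bEnd (hbip : ∀ e, part (e₁ e) ≠ part (e₂ e)) (e : E) :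
    part (bEnd e₁ e₂ part e) = true := by
  have := hbip e
  unfold bEnd
  split
  · rename_i h
    revert this h
    cases part (e₁ e) <;> cases part (e₂ e) <;> simp
  · rename_i h
    revert this h
    cases part (e₁ e) <;> cases part (e₂ e) <;> simp

lemma aEnd_ne_bEnd (hbip : ∀ e, part (e₁ e) ≠ part (e₂ e)) (e : E) :
    aEnd e₁ e₂ part e ≠ bEnd e₁ e₂ part e := by
  intro h
  have h1 := part_aEnd hbip e
  have h2 := part_bEnd hbip e
  rw [h, h2] at h1
  exact Bool.noConfusion h1

lemma edgeEnds_eq_pair (e : E) :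
    edgeEnds e₁ e₂ e = {aEnd e₁ e₂ part e, bEnd e₁ e₂ part e} := by
  unfold edgeEnds aEnd bEnd
  split
  · rfl
  · exact Finset.pair_comm _ _

lemma aEnd_mem_ends (e : E) : aEnd e₁ e₂ part e ∈ edgeEnds e₁ e₂ e := by
  rw [edgeEnds_eq_pair (part := part)]; simp

lemma bEnd_mem_ends (e : E) : bEnd e₁ e₂ part e ∈ edgeEnds e₁ e₂ e := by
  rw [edgeEnds_eq_pair (part := part)]; simp

lemma mem_edgeEnds_iff (e : E) (v : V) :
    v ∈ edgeEnds e₁ e₂ e ↔ v = aEnd e₁ e₂ part e ∨ v = bEnd e₁ e₂ part e := by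
  rw [edgeEnds_eq_pair (part := part)]; simp

lemma mem_matchedVerts {v : V} :
    v ∈ matchedVerts e₁ e₂ M ↔ ∃ m ∈ M, v ∈ edgeEnds e₁ e₂ m := Finset.mem_biUnion

/-- two matching edges sharing a vertex are equal -/
lemma matching_eq_of_shared (hM : IsMatchingE e₁ e₂ M) {m m' : E} (hm : m ∈ M)
    (hm' : m' ∈ M) {v : V} (h1 : v ∈ edgeEnds e₁ e₂ m) (h2 : v ∈ edgeEnds e₁ e₂ m') :
    m = m' := by
  by_contra hne
  exact (Finset.disjoint_left.mp (hM.2 m hm m' hm' hne) h1) h2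

lemma eq_aEnd_of_mem_ends (hbip : ∀ e, part (e₁ e) ≠ part (e₂ e)) {e : E} {v : V}
    (hv : v ∈ edgeEnds e₁ e₂ e) (hp : part v = false) : v = aEnd e₁ e₂ part e := by
  rcases (mem_edgeEnds_iff (part := part) e v).mp hv with h | h
  · exact h
  · rw [h, part_bEnd hbip] at hp; exact Bool.noConfusion hp

lemma eq_bEnd_of_mem_ends (hbip : ∀ e, part (e₁ e) ≠ part (e₂ e)) {e : E} {v : V}
    (hv : v ∈ edgeEnds e₁ e₂ e) (hp : part v = true) : v = bEnd e₁ e₂ part e := by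
  rcases (mem_edgeEnds_iff (part := part) e v).mp hv with h | h
  · rw [h, part_aEnd hbip] at hp; exact Bool.noConfusion hp
  · exact h

lemma injOn_aEnd (hM : IsMatchingE e₁ e₂ M) :
    Set.InjOn (aEnd e₁ e₂ part) ↑M := by
  intro x hx y hy h
  exact matching_eq_of_shared hM hx hy (aEnd_mem_ends x)
    (h ▸ aEnd_mem_ends (part := part) y)

lemma injOn_bEnd (hM : IsMatchingE e₁ e₂ M) :
    Set.InjOn (bEnd e₁ e₂ part) ↑M := by
  intro x hx y hy h
  exact matching_eq_of_shared hM hx hy (bEnd_mem_ends x)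
    (h ▸ bEnd_mem_ends (part := part) y)

/-- disjointness of edge ends from distinctness of the a- and b-ends -/
lemma disjoint_ends_of_ne (hbip : ∀ e, part (e₁ e) ≠ part (e₂ e)) {x y : E}
    (ha : aEnd e₁ e₂ part x ≠ aEnd e₁ e₂ part y)
    (hb : bEnd e₁ e₂ part x ≠ bEnd e₁ e₂ part y) :
    Disjoint (edgeEnds e₁ e₂ x) (edgeEnds e₁ e₂ y) := by
  rw [Finset.disjoint_left]
  intro v hvx hvy
  rcases (mem_edgeEnds_iff (part := part) x v).mp hvx with h | h <;>
    rcases (mem_edgeEnds_iff (part := part) y v).mp hvy with h' | h'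
  · exact ha (h ▸ h')
  · have := part_aEnd hbip x; have := part_bEnd hbip y
    rw [← h] at *; rw [← h'] at *; simp_all
  · have := part_bEnd hbip x; have := part_aEnd hbip y
    rw [← h] at *; rw [← h'] at *; simp_all
  · exact hb (h ▸ h')


variable (e₁ e₂ : E → V) (col : E → C) (part : V → Bool) (M : Finset E)

/-- A good alternating path, stored in reverse: `GP e P` means the path whose
non-matching edges are `(e :: P).reverse`, starting from a free vertex on side
`false`, alternating through matching edges of `M`, with all non-matching-edge
colours distinct and missing from `M`, and all vertices distinct. -/
def GP : E → List E → Prop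
  | e, [] => col e ∉ M.image col ∧ aEnd e₁ e₂ part e ∉ matchedVerts e₁ e₂ M
  | e, hd :: tl => GP hd tl ∧ col e ∉ M.image col ∧ col e ∉ (hd :: tl).map col ∧
      bEnd e₁ e₂ part e ∉ (hd :: tl).map (bEnd e₁ e₂ part) ∧
      ∃ m ∈ M, bEnd e₁ e₂ part m = bEnd e₁ e₂ part hd ∧
        aEnd e₁ e₂ part e = aEnd e₁ e₂ part m

variable {e₁ e₂ col part M}

lemma gp_col_missing {e : E} {P : List E} (h : GP e₁ e₂ col part M e P) :
    ∀ g ∈ (e :: P), col g ∉ M.image col := by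
  induction P generalizing e with
  | nil => intro g hg; simp at hg; subst hg; exact h.1
  | cons hd tl ih =>
      intro g hg
      rcases List.mem_cons.mp hg with rfl | hg
      · exact h.2.1
      · exact ih h.1 g hg

lemma gp_nodup_b {e : E} {P : List E} (h : GP e₁ e₂ col part M e P) :
    ((e :: P).map (bEnd e₁ e₂ part)).Nodup := by
  induction P generalizing e with
  | nil => simp
  | cons hd tl ih => exact List.nodup_cons.mpr ⟨h.2.2.2.1, ih h.1⟩

lemma gp_nodup_col {e : E} {P : List E} (h : GP e₁ e₂ col part M e P) :
    ((e :: P).map col).Nodup := by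
  induction P generalizing e with
  | nil => simp
  | cons hd tl ih => exact List.nodup_cons.mpr ⟨h.2.2.1, ih h.1⟩

/-- if a matching edge's `a`-end appears among the path's `a`-ends, then its
`b`-end appears among the `b`-ends of the tail. -/
lemma gp_aEnd_loc (hbip : ∀ e, part (e₁ e) ≠ part (e₂ e))
    (hM : IsMatchingE e₁ e₂ M) {e : E} {P : List E}
    (h : GP e₁ e₂ col part M e P) :
    ∀ m ∈ M, aEnd e₁ e₂ part m ∈ (e :: P).map (aEnd e₁ e₂ part) →
      bEnd e₁ e₂ part m ∈ P.map (bEnd e₁ e₂ part) := by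
  induction P generalizing e with
  | nil =>
      intro m hm hmem
      simp only [List.map_cons, List.map_nil, List.mem_singleton] at hmem
      exfalso
      refine h.2 (mem_matchedVerts.mpr ⟨m, hm, ?_⟩)
      rw [← hmem]; exact aEnd_mem_ends m
  | cons hd tl ih =>
      intro m hm hmem
      obtain ⟨hgp, _, _, hb, m', hm', hbm', ham'⟩ := h
      rcases List.mem_cons.mp hmem with heq | hmem'
      · -- aEnd m = aEnd e = aEnd m', so m = m'
        have : m = m' := by
          refine matching_eq_of_shared hM hm hm' (v := aEnd e₁ e₂ part m) (aEnd_mem_ends m) ?_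
          rw [heq, ham']; exact aEnd_mem_ends m'
        subst this
        rw [hbm']
        exact List.mem_map_of_mem List.mem_cons_self
      · have := ih hgp m hm hmem'
        exact List.mem_map.mpr (by
          rcases List.mem_map.mp this with ⟨g, hg, hgeq⟩
          exact ⟨g, List.mem_cons_of_mem _ hg, hgeq⟩)

lemma gp_nodup_a (hbip : ∀ e, part (e₁ e) ≠ part (e₂ e))
    (hM : IsMatchingE e₁ e₂ M) {e : E} {P : List E}
    (h : GP e₁ e₂ col part M e P) :
    ((e :: P).map (aEnd e₁ e₂ part)).Nodup := by
  induction P generalizing e with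
  | nil => simp
  | cons hd tl ih =>
      refine List.nodup_cons.mpr ⟨?_, ih h.1⟩
      intro hmem
      obtain ⟨hgp, _, _, hb, m', hm', hbm', ham'⟩ := h
      rw [ham'] at hmem
      have := gp_aEnd_loc hbip hM hgp m' hm' hmem
      rw [hbm'] at this
      have hnodup := gp_nodup_b hgp
      rw [List.map_cons, List.nodup_cons] at hnodup
      exact hnodup.1 this

/-- each edge of the path either has a free `a`-end, or its `a`-end is the
`a`-end of a matching edge whose `b`-end occurs among the path-tail `b`-ends. -/
lemma gp_aloc {e : E} {P : List E} (h : GP e₁ e₂ col part M e P) :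
    ∀ g ∈ (e :: P), aEnd e₁ e₂ part g ∉ matchedVerts e₁ e₂ M ∨
      ∃ me ∈ M, aEnd e₁ e₂ part g = aEnd e₁ e₂ part me ∧
        bEnd e₁ e₂ part me ∈ P.map (bEnd e₁ e₂ part) := by
  induction P generalizing e with
  | nil =>
      intro g hg; simp at hg; subst hg; exact Or.inl h.2
  | cons hd tl ih =>
      intro g hg
      obtain ⟨hgp, _, _, hb, m', hm', hbm', ham'⟩ := h
      rcases List.mem_cons.mp hg with rfl | hg'
      · exact Or.inr ⟨m', hm', ham', by
          rw [hbm']; exact List.mem_map_of_mem List.mem_cons_self⟩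
      · rcases ih hgp g hg' with hfree | ⟨me, hme, h1, h2⟩
        · exact Or.inl hfree
        · refine Or.inr ⟨me, hme, h1, ?_⟩
          rcases List.mem_map.mp h2 with ⟨g', hg'', hgeq⟩
          exact List.mem_map.mpr ⟨g', List.mem_cons_of_mem _ hg'', hgeq⟩

/-- every edge in the tail of the path has a matching edge at its `b`-end. -/
lemma gp_bEnd_matched {e : E} {P : List E} (h : GP e₁ e₂ col part M e P) :
    ∀ g ∈ P, ∃ me ∈ M, bEnd e₁ e₂ part me = bEnd e₁ e₂ part g := by
  induction P generalizing e with
  | nil => intro g hg; simp at hg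
  | cons hd tl ih =>
      intro g hg
      obtain ⟨hgp, _, _, hb, m', hm', hbm', ham'⟩ := h
      rcases List.mem_cons.mp hg with rfl | hg'
      · exact ⟨m', hm', hbm'⟩
      · exact ih hgp g hg'

/-- each element of the path is the top of a good sub-path. -/
lemma gp_suffix {e : E} {P : List E} (h : GP e₁ e₂ col part M e P) :
    ∀ g ∈ (e :: P), ∃ tl, GP e₁ e₂ col part M g tl ∧
      ∀ x ∈ (g :: tl), x ∈ (e :: P) := by
  induction P generalizing e with
  | nil =>
      intro g hg; simp at hg; subst hg
      exact ⟨[], h, by simp⟩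
  | cons hd tl ih =>
      intro g hg
      rcases List.mem_cons.mp hg with rfl | hg'
      · exact ⟨hd :: tl, h, fun x hx => hx⟩
      · obtain ⟨tl', htl', hsub⟩ := ih h.1 g hg'
        exact ⟨tl', htl', fun x hx => List.mem_cons_of_mem _ (hsub x hx)⟩


/-- KEY LEMMA (maximality): the `b`-end of the top edge of a good path is matched,
else we could augment along the path. -/
lemma gp_head_matched (hbip : ∀ e, part (e₁ e) ≠ part (e₂ e))
    (hM : IsMatchingE e₁ e₂ M) (hrb : IsRainbow col M)
    (hmax : ∀ N : Finset E, IsMatchingE e₁ e₂ N → IsRainbow col N → N.card ≤ M.card)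
    {e : E} {P : List E} (h : GP e₁ e₂ col part M e P) :
    bEnd e₁ e₂ part e ∈ matchedVerts e₁ e₂ M := by
  by_contra hfree
  have hLnodup : (e :: P).Nodup := List.Nodup.of_map col (gp_nodup_col h)
  set Pf : Finset E := (e :: P).toFinset with hPf
  have hmemPf : ∀ x, x ∈ Pf ↔ x ∈ (e :: P) := fun x => List.mem_toFinset
  have hPfcard : Pf.card = P.length + 1 := by
    rw [hPf, List.toFinset_card_of_nodup hLnodup]; simp
  set ms : Finset E :=
    M.filter (fun m => bEnd e₁ e₂ part m ∈ P.map (bEnd e₁ e₂ part)) with hms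
  have hmssub : ms ⊆ M := filter_subset _ _
  have hmemms : ∀ m, m ∈ ms ↔ m ∈ M ∧ bEnd e₁ e₂ part m ∈ P.map (bEnd e₁ e₂ part) :=
    fun m => mem_filter
  have hmscard : ms.card ≤ P.length := by
    have hinj : Set.InjOn (bEnd e₁ e₂ part) ↑ms :=
      (injOn_bEnd hM).mono (by exact_mod_cast hmssub)
    calc ms.card = (ms.image (bEnd e₁ e₂ part)).card := (card_image_of_injOn hinj).symm
      _ ≤ (P.map (bEnd e₁ e₂ part)).toFinset.card := by
          refine card_le_card ?_
          intro v hv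
          rcases mem_image.mp hv with ⟨m, hm, rfl⟩
          exact List.mem_toFinset.mpr ((hmemms m).mp hm).2
      _ ≤ (P.map (bEnd e₁ e₂ part)).length := List.toFinset_card_le _
      _ = P.length := List.length_map _
  have hPfnotM : ∀ g ∈ (e :: P), g ∉ M := fun g hg hgM =>
    gp_col_missing h g hg (mem_image_of_mem col hgM)
  have hdisj : Disjoint (M \ ms) Pf := by
    rw [Finset.disjoint_left]
    intro x hx hxPf
    exact hPfnotM x ((hmemPf x).mp hxPf) (mem_sdiff.mp hx).1
  set N : Finset E := (M \ ms) ∪ Pf with hN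
  -- helper facts for the matching property
  have haPf : ∀ b ∈ Pf, ∀ a ∈ M \ ms, aEnd e₁ e₂ part b ≠ aEnd e₁ e₂ part a := by
    intro b hb a ha hab
    have hbL := (hmemPf b).mp hb
    have haM := (mem_sdiff.mp ha).1
    have hams := (mem_sdiff.mp ha).2
    rcases gp_aloc h b hbL with hfa | ⟨me, hme, h1, h2⟩
    · exact hfa (by
        rw [hab]
        exact mem_matchedVerts.mpr ⟨a, haM, aEnd_mem_ends a⟩)
    · have hmems : me ∈ ms := (hmemms me).mpr ⟨hme, h2⟩
      have : a = me := by
        refine matching_eq_of_shared hM haM hme (v := aEnd e₁ e₂ part a)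
          (aEnd_mem_ends a) ?_
        rw [← hab, h1]; exact aEnd_mem_ends me
      exact hams (this ▸ hmems)
  have hbPf : ∀ b ∈ Pf, ∀ a ∈ M \ ms, bEnd e₁ e₂ part b ≠ bEnd e₁ e₂ part a := by
    intro b hb a ha hab
    have haM := (mem_sdiff.mp ha).1
    have hams := (mem_sdiff.mp ha).2
    rcases List.mem_cons.mp ((hmemPf b).mp hb) with rfl | hbP
    · exact hfree (by
        rw [hab]; exact mem_matchedVerts.mpr ⟨a, haM, bEnd_mem_ends a⟩)
    · refine hams ((hmemms a).mpr ⟨haM, ?_⟩)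
      rw [← hab]
      exact List.mem_map_of_mem hbP
  -- N is a matching
  have hmatchN : IsMatchingE e₁ e₂ N := by
    constructor
    · intro x _ hx
      exact hbip x (by rw [hx])
    · intro a ha b hb hne
      rcases mem_union.mp ha with ha' | ha' <;> rcases mem_union.mp hb with hb' | hb'
      · exact hM.2 a (mem_sdiff.mp ha').1 b (mem_sdiff.mp hb').1 hne
      · exact disjoint_ends_of_ne hbip (haPf b hb' a ha' ∘ Eq.symm)
          (hbPf b hb' a ha' ∘ Eq.symm)
      · exact disjoint_ends_of_ne hbip (haPf a ha' b hb') (hbPf a ha' b hb')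
      · refine disjoint_ends_of_ne hbip ?_ ?_
        · intro hq
          exact hne (List.inj_on_of_nodup_map (gp_nodup_a hbip hM h)
            ((hmemPf a).mp ha') ((hmemPf b).mp hb') hq)
        · intro hq
          exact hne (List.inj_on_of_nodup_map (gp_nodup_b h)
            ((hmemPf a).mp ha') ((hmemPf b).mp hb') hq)
  -- N is rainbow
  have hrbN : IsRainbow col N := by
    intro a ha b hb hcab
    simp only [hN, coe_union, Set.mem_union, mem_coe] at ha hb
    rcases ha with ha' | ha' <;> rcases hb with hb' | hb'
    · exact hrb (by exact_mod_cast mem_sdiff.mp ha' |>.1)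
        (by exact_mod_cast mem_sdiff.mp hb' |>.1) hcab
    · exact absurd (hcab ▸ mem_image_of_mem col (mem_sdiff.mp ha').1)
        (gp_col_missing h b ((hmemPf b).mp hb'))
    · exact absurd (hcab ▸ mem_image_of_mem col (mem_sdiff.mp hb').1)
        (gp_col_missing h a ((hmemPf a).mp ha'))
    · exact List.inj_on_of_nodup_map (gp_nodup_col h)
        ((hmemPf a).mp ha') ((hmemPf b).mp hb') hcab
  -- but N is bigger than M
  have hcardN : N.card = (M.card - ms.card) + (P.length + 1) := by
    rw [hN, card_union_of_disjoint hdisj, card_sdiff_of_subset hmssub, hPfcard]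
  have hmsM : ms.card ≤ M.card := card_le_card hmssub
  have := hmax N hmatchN hrbN
  omega


variable (e₁ e₂ col part M) in
/-- the set of matching edges whose `b`-end is reachable by a good path with
colours inside `S`. -/
noncomputable def Lam (S : Finset C) : Finset E :=
  M.filter (fun m => ∃ hd tl, GP e₁ e₂ col part M hd tl ∧
    (∀ g ∈ (hd :: tl), col g ∈ S) ∧ bEnd e₁ e₂ part m = bEnd e₁ e₂ part hd)

lemma growth (hbip : ∀ e, part (e₁ e) ≠ part (e₂ e))
    (hM : IsMatchingE e₁ e₂ M) (hrb : IsRainbow col M)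
    (hmax : ∀ N : Finset E, IsMatchingE e₁ e₂ N → IsRainbow col N → N.card ≤ M.card)
    {c : C} {S : Finset C} (hc : c ∉ M.image col) (hcS : c ∉ S)
    (hK : IsMatchingE e₁ e₂ (colourClass col c)) :
    (colourClass col c).card + (Lam e₁ e₂ col part M S).card
      ≤ (Lam e₁ e₂ col part M (insert c S)).card + M.card := by
  set K := colourClass col c with hKdef
  have hKcol : ∀ x ∈ K, col x = c := by
    letI : DecidablePred (fun e : E => col e = c) := fun e => Classical.propDecidable _
    intro x hx
    rw [hKdef] at hx
    unfold colourClass at hx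
    exact (mem_filter.mp hx).2
  set Λ := Lam e₁ e₂ col part M S with hΛdef
  set Λ' := Lam e₁ e₂ col part M (insert c S) with hΛ'def
  have hΛsub : Λ ⊆ M := filter_subset _ _
  have hΛ'sub : Λ' ⊆ M := filter_subset _ _
  set K' := K.filter (fun x => aEnd e₁ e₂ part x ∉ matchedVerts e₁ e₂ M ∨
      ∃ m ∈ Λ, aEnd e₁ e₂ part x = aEnd e₁ e₂ part m) with hK'def
  have hK'sub : K' ⊆ K := filter_subset _ _
  -- Step 1 : |K| + |Λ| ≤ |K'| + |M|
  have step1 : K.card + Λ.card ≤ K'.card + M.card := by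
    have hsub : ∀ x ∈ K \ K',
        ∃ m ∈ M \ Λ, aEnd e₁ e₂ part m = aEnd e₁ e₂ part x := by
      intro x hx
      obtain ⟨hxK, hxK'⟩ := mem_sdiff.mp hx
      have hcond : ¬(aEnd e₁ e₂ part x ∉ matchedVerts e₁ e₂ M ∨
          ∃ m ∈ Λ, aEnd e₁ e₂ part x = aEnd e₁ e₂ part m) :=
        fun hq => hxK' (mem_filter.mpr ⟨hxK, hq⟩)
      push_neg at hcond
      obtain ⟨hmat, hnot⟩ := hcond
      obtain ⟨m, hm, hvm⟩ := mem_matchedVerts.mp hmat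
      have heq : aEnd e₁ e₂ part x = aEnd e₁ e₂ part m :=
        eq_aEnd_of_mem_ends hbip hvm (part_aEnd hbip x)
      exact ⟨m, mem_sdiff.mpr ⟨hm, fun hmΛ => hnot m hmΛ heq⟩, heq.symm⟩
    have h1 : (K \ K').card ≤ (M \ Λ).card := by
      have hinjK : Set.InjOn (aEnd e₁ e₂ part) ↑(K \ K') :=
        (injOn_aEnd hK).mono (by exact_mod_cast sdiff_subset)
      calc (K \ K').card = ((K \ K').image (aEnd e₁ e₂ part)).card :=
            (card_image_of_injOn hinjK).symm
        _ ≤ ((M \ Λ).image (aEnd e₁ e₂ part)).card := by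
            refine card_le_card ?_
            intro v hv
            rcases mem_image.mp hv with ⟨x, hx, rfl⟩
            obtain ⟨m, hm, hmeq⟩ := hsub x hx
            exact mem_image.mpr ⟨m, hm, hmeq⟩
        _ ≤ (M \ Λ).card := card_image_le
    have h2 : (K \ K').card = K.card - K'.card := card_sdiff_of_subset hK'sub
    have h3 : (M \ Λ).card = M.card - Λ.card := card_sdiff_of_subset hΛsub
    have h4 := card_le_card hK'sub
    have h5 := card_le_card hΛsub
    omega
  -- Step 2 : |K'| ≤ |Λ'|
  have step2 : K'.card ≤ Λ'.card := by
    have hmain : ∀ x ∈ K', ∃ m ∈ Λ', bEnd e₁ e₂ part m = bEnd e₁ e₂ part x := by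
      intro x hx
      obtain ⟨hxK, hcond⟩ := mem_filter.mp hx
      have hxcol : col x = c := hKcol x hxK
      have hxmiss : col x ∉ M.image col := by rw [hxcol]; exact hc
      rcases hcond with hfree | ⟨m0, hm0Λ, haeq⟩
      · -- single-edge good path
        have h0 : GP e₁ e₂ col part M x [] := ⟨hxmiss, hfree⟩
        obtain ⟨m, hmM, hvm⟩ :=
          mem_matchedVerts.mp (gp_head_matched hbip hM hrb hmax h0)
        have hbm : bEnd e₁ e₂ part m = bEnd e₁ e₂ part x :=
          (eq_bEnd_of_mem_ends hbip hvm (part_bEnd hbip x)).symm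
        refine ⟨m, mem_filter.mpr ⟨hmM, x, [], h0, ?_, hbm⟩, hbm⟩
        intro g hg
        simp only [List.mem_singleton] at hg
        subst hg
        rw [hxcol]
        exact mem_insert_self c S
      · obtain ⟨hm0M, hd, tl, hgp, hcols, hbeq⟩ := mem_filter.mp hm0Λ
        by_cases hbx : bEnd e₁ e₂ part x ∈ (hd :: tl).map (bEnd e₁ e₂ part)
        · -- the b-end of x is already on the path: use a sub-path
          rcases List.mem_map.mp hbx with ⟨g, hgmem, hgeq⟩
          have hme : ∃ me ∈ M, bEnd e₁ e₂ part me = bEnd e₁ e₂ part g := by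
            rcases List.mem_cons.mp hgmem with rfl | hgtl
            · exact ⟨m0, hm0M, hbeq⟩
            · exact gp_bEnd_matched hgp g hgtl
          obtain ⟨me, hmeM, hmeb⟩ := hme
          obtain ⟨tl', hgp', hsub'⟩ := gp_suffix hgp g hgmem
          refine ⟨me, mem_filter.mpr ⟨hmeM, g, tl', hgp', ?_, hmeb⟩,
            hmeb.trans hgeq⟩
          intro y hy
          exact mem_insert_of_mem (hcols y (hsub' y hy))
        · -- extend the path by x
          have hxnotcol : col x ∉ (hd :: tl).map col := by
            intro hmem
            rcases List.mem_map.mp hmem with ⟨g, hg, hgc⟩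
            exact hcS (by rw [← hxcol, ← hgc]; exact hcols g hg)
          have hgpx : GP e₁ e₂ col part M x (hd :: tl) :=
            ⟨hgp, hxmiss, hxnotcol, hbx, m0, hm0M, hbeq, haeq⟩
          obtain ⟨m, hmM, hvm⟩ :=
            mem_matchedVerts.mp (gp_head_matched hbip hM hrb hmax hgpx)
          have hbm : bEnd e₁ e₂ part m = bEnd e₁ e₂ part x :=
            (eq_bEnd_of_mem_ends hbip hvm (part_bEnd hbip x)).symm
          refine ⟨m, mem_filter.mpr ⟨hmM, x, hd :: tl, hgpx, ?_, hbm⟩, hbm⟩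
          intro y hy
          rcases List.mem_cons.mp hy with rfl | hy'
          · rw [hxcol]; exact mem_insert_self c S
          · exact mem_insert_of_mem (hcols y hy')
    have hinjK' : Set.InjOn (bEnd e₁ e₂ part) ↑K' :=
      (injOn_bEnd hK).mono (by exact_mod_cast hK'sub)
    calc K'.card = (K'.image (bEnd e₁ e₂ part)).card :=
          (card_image_of_injOn hinjK').symm
      _ ≤ (Λ'.image (bEnd e₁ e₂ part)).card := by
          refine card_le_card ?_
          intro v hv
          rcases mem_image.mp hv with ⟨x, hx, rfl⟩
          obtain ⟨m, hm, hmeq⟩ := hmain x hx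
          exact mem_image.mpr ⟨m, hm, hmeq⟩
      _ ≤ Λ'.card := card_image_le
  omega

lemma iter (hbip : ∀ e, part (e₁ e) ≠ part (e₂ e))
    (hM : IsMatchingE e₁ e₂ M) (hrb : IsRainbow col M)
    (hmax : ∀ N : Finset E, IsMatchingE e₁ e₂ N → IsRainbow col N → N.card ≤ M.card)
    (nn : ℕ)
    (hKall : ∀ c : C, IsMatchingE e₁ e₂ (colourClass col c) ∧
      nn ≤ (colourClass col c).card) :
    ∀ (l : List C) (S : Finset C), l.Nodup → (∀ c ∈ l, c ∉ M.image col) →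
      (∀ c ∈ l, c ∉ S) →
      (Lam e₁ e₂ col part M S).card + l.length * nn ≤
        (Lam e₁ e₂ col part M (l.foldl (fun s c => insert c s) S)).card
          + l.length * M.card := by
  intro l
  induction l with
  | nil => intro S _ _ _; simp
  | cons c l' ih =>
      intro S hnd hmiss hS
      have hg := growth hbip hM hrb hmax (hmiss c List.mem_cons_self)
        (hS c List.mem_cons_self) (hKall c).1
      have hnn : nn ≤ (colourClass col c).card := (hKall c).2
      have hih := ih (insert c S) (List.nodup_cons.mp hnd).2
        (fun c' hc' => hmiss c' (List.mem_cons_of_mem _ hc'))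
        (fun c' hc' => by
          rcases List.nodup_cons.mp hnd with ⟨hc_notin, _⟩
          refine fun hmem => ?_
          rcases mem_insert.mp hmem with rfl | hmem'
          · exact hc_notin hc'
          · exact hS c' (List.mem_cons_of_mem _ hc') hmem')
      have hfold : (c :: l').foldl (fun s c => insert c s) S
          = l'.foldl (fun s c => insert c s) (insert c S) := rfl
      rw [hfold]
      have hlen : (c :: l').length = l'.length + 1 := rfl
      rw [hlen, Nat.add_mul, Nat.add_mul, one_mul]
      linarith

end Aux


/-- Barát–Gyárfás–Sárközy: for all sufficiently large `n`, every
`n`-edge-coloured bipartite multigraph whose colour classes are matchings of size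
at least `n` contains a rainbow matching of size at least `n - √n`. -/
theorem stmt_8 :
    ∃ n₀ : ℕ, ∀ n : ℕ, n₀ ≤ n →
      ∀ (V E : Type) [Fintype V] [DecidableEq V] [Fintype E],
        ∀ (e₁ e₂ : E → V) (col : E → Fin n) (part : V → Bool),
          (∀ e : E, part (e₁ e) ≠ part (e₂ e)) →
          (∀ c : Fin n, IsMatchingE e₁ e₂ (colourClass col c) ∧
            n ≤ (colourClass col c).card) →
          ∃ M : Finset E, IsMatchingE e₁ e₂ M ∧ IsRainbow col M ∧
            (n : ℝ) - Real.sqrt n ≤ M.card := by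
  refine ⟨1, ?_⟩
  intro n hn V E iV dV iE e₁ e₂ col part hbip hcol
  obtain ⟨M, hMmem, hmax'⟩ := Finset.exists_max_image
    ((univ : Finset (Finset E)).filter
      (fun N => IsMatchingE e₁ e₂ N ∧ IsRainbow col N))
    Finset.card
    ⟨∅, mem_filter.mpr ⟨mem_univ _, ⟨by simp, by simp⟩, by
      intro x hx; simp at hx⟩⟩
  obtain ⟨-, hMm, hMr⟩ := mem_filter.mp hMmem
  have hmax : ∀ N : Finset E, IsMatchingE e₁ e₂ N → IsRainbow col N →
      N.card ≤ M.card := fun N h1 h2 =>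
    hmax' N (mem_filter.mpr ⟨mem_univ _, h1, h2⟩)
  refine ⟨M, hMm, hMr, ?_⟩
  set s := M.card with hs
  have hsq : (0:ℝ) ≤ Real.sqrt n := Real.sqrt_nonneg _
  by_cases hsn : n ≤ s
  · have : (n:ℝ) ≤ s := Nat.cast_le.mpr hsn
    linarith
  · push_neg at hsn
    have himg : (M.image col).card = s := card_image_of_injOn hMr
    set t := n - s with ht
    have hMiss : ((univ : Finset (Fin n)) \ M.image col).card = t := by
      rw [card_sdiff_of_subset (subset_univ _), himg, card_univ, Fintype.card_fin]
    set l := ((univ : Finset (Fin n)) \ M.image col).toList with hl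
    have hlen : l.length = t := by rw [hl, Finset.length_toList, hMiss]
    have hnd : l.Nodup := Finset.nodup_toList _
    have hmiss : ∀ c ∈ l, c ∉ M.image col := fun c hc =>
      (mem_sdiff.mp (Finset.mem_toList.mp hc)).2
    have hind := iter hbip hMm hMr hmax n hcol l ∅ hnd hmiss (by simp)
    rw [hlen] at hind
    have hfin : (Lam e₁ e₂ col part M (l.foldl (fun s c => insert c s) ∅)).card
        ≤ s := card_le_card (filter_subset _ _)
    have h6 : t * n ≤ s + t * s := by
      have h0 : t * n ≤ (Lam e₁ e₂ col part M
          (l.foldl (fun s c => insert c s) ∅)).card + t * s :=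
        le_trans (Nat.le_add_left _ _) hind
      linarith
    have hns : n = s + t := by omega
    have h7 : t * t ≤ s := by
      have hq : t * s + t * t ≤ s + t * s := by
        calc t * s + t * t = t * (s + t) := by ring
          _ = t * n := by rw [← hns]
          _ ≤ s + t * s := h6
      linarith
    have htn : t * t ≤ n := le_trans h7 hsn.le
    have hreal : (t:ℝ) ≤ Real.sqrt n := by
      have h8 : ((t:ℝ)) * t ≤ (n:ℝ) := by exact_mod_cast htn
      calc (t:ℝ) = Real.sqrt (t * t) :=
            (Real.sqrt_mul_self (by positivity)).symm
        _ ≤ Real.sqrt n := Real.sqrt_le_sqrt h8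
    have hcast : (s:ℝ) + t = n := by exact_mod_cast hns.symm
    linarith
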